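/- In the braid group Br_n (n ≥ 2), for every 1 ≤ i ≤ n-1 and every m ≥ 1, one has X_{[1,n-i]}·sh(FT_{n-1})·FT_n^{m-1}·Y_{[1,n-i]} = X_{[n-i,n]}^{-1}·Y_{[n-i,n]}^{-1}·FT_n^m, where sh : Br_{n-1} → Br_n is the homomorphism sending σ_j to σ_{j+1}. -/

import Mathlib

/-- The braid relations on `g` generators `σ_1,…,σ_g` (0-indexed here):
`σ_iσ_{i+1}σ_i = σ_{i+1}σ_iσ_{i+1}` and `σ_iσ_j = σ_jσ_i` for `|i-j| ≥ 2`. -/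
def braidRelsSet (g : ℕ) : Set (FreeGroup (Fin g)) :=
  {r | (∃ i j : Fin g, (i : ℕ) + 1 = (j : ℕ) ∧
          r = FreeGroup.of i * FreeGroup.of j * FreeGroup.of i *
              (FreeGroup.of j * FreeGroup.of i * FreeGroup.of j)⁻¹) ∨
       (∃ i j : Fin g, (i : ℕ) + 2 ≤ (j : ℕ) ∧
          r = FreeGroup.of i * FreeGroup.of j *
              (FreeGroup.of j * FreeGroup.of i)⁻¹)}

/-- The braid group `Br_n` on `n` strands, presented by generators
`σ_1,…,σ_{n-1}` and the braid relations. -/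
def BraidGroup (n : ℕ) : Type := PresentedGroup (braidRelsSet (n - 1))

instance (n : ℕ) : Group (BraidGroup n) :=
  inferInstanceAs (Group (PresentedGroup (braidRelsSet (n - 1))))

/-- The generator `σ_i` of `Br_n`, for `1 ≤ i ≤ n-1` (junk value `1` otherwise). -/
def σ (n i : ℕ) : BraidGroup n :=
  if h : i - 1 < n - 1 then PresentedGroup.of (⟨i - 1, h⟩ : Fin (n - 1)) else 1

/-- `X_{[i,j]} = σ_{j-1}σ_{j-2}⋯σ_i` in `Br_n` (empty product equals 1). -/
def Xb (n i j : ℕ) : BraidGroup n :=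
  ((List.range (j - i)).map fun k => σ n (j - 1 - k)).prod

/-- `Y_{[i,j]} = σ_iσ_{i+1}⋯σ_{j-1}` in `Br_n` (empty product equals 1). -/
def Yb (n i j : ℕ) : BraidGroup n :=
  ((List.range (j - i)).map fun k => σ n (i + k)).prod

/-- The half twist `HT_n = X_{[1,2]}X_{[1,3]}⋯X_{[1,n]}` in `Br_n`. -/
def HTb (n : ℕ) : BraidGroup n :=
  ((List.range (n - 1)).map fun k => Xb n 1 (k + 2)).prod

/-- The full twist `FT_n = (σ_{n-1}⋯σ_2σ_1)^n` in `Br_n`. -/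
def FTb (n : ℕ) : BraidGroup n := Xb n 1 n ^ n

/-- The Jucys–Murphy braid `J_k = X_{[1,k]}Y_{[1,k]}` in `Br_n`. -/
def Jb (n k : ℕ) : BraidGroup n := Xb n 1 k * Yb n 1 k

lemma rel_one {g : ℕ} {r : FreeGroup (Fin g)} (h : r ∈ braidRelsSet g) :
    PresentedGroup.mk (braidRelsSet g) r = 1 :=
  (QuotientGroup.eq_one_iff r).mpr (Subgroup.subset_normalClosure h)

lemma braid_rel_fin {g : ℕ} (i j : Fin g) (hij : (i:ℕ)+1 = j) :
    (PresentedGroup.of i : PresentedGroup (braidRelsSet g)) * PresentedGroup.of j * PresentedGroup.of i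
      = PresentedGroup.of j * PresentedGroup.of i * PresentedGroup.of j := by
  have h := rel_one (g := g) (Or.inl ⟨i, j, hij, rfl⟩)
  rw [map_mul, map_mul, map_inv, map_mul, map_mul] at h
  exact mul_inv_eq_one.mp h

lemma comm_rel_fin {g : ℕ} (i j : Fin g) (hij : (i:ℕ)+2 ≤ j) :
    (PresentedGroup.of i : PresentedGroup (braidRelsSet g)) * PresentedGroup.of j
      = PresentedGroup.of j * PresentedGroup.of i := by
  have h := rel_one (g := g) (Or.inr ⟨i, j, hij, rfl⟩)
  rw [map_mul, map_inv, map_mul] at h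
  exact mul_inv_eq_one.mp h

lemma sigma_junk {n j : ℕ} (h : n ≤ j) : σ n j = 1 := by
  have : ¬ (j - 1 < n - 1) := by omega
  simp [σ, this]

lemma sigma_big {n j : ℕ} (h1 : 1 ≤ j) (h2 : j ≤ n - 1) :
    σ n j = PresentedGroup.of (⟨j - 1, by omega⟩ : Fin (n - 1)) := by
  have : j - 1 < n - 1 := by omega
  simp [σ, this]; rfl

lemma braid_rel {n j : ℕ} (h1 : 1 ≤ j) (h2 : j + 2 ≤ n) :
    σ n j * σ n (j+1) * σ n j = σ n (j+1) * σ n j * σ n (j+1) := by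
  rw [sigma_big h1 (by omega), sigma_big (by omega) (by omega : j+1 ≤ n-1)]
  exact braid_rel_fin _ _ (by simp; omega)

lemma comm_rel {n i j : ℕ} (h1 : 1 ≤ i) (h2 : i + 2 ≤ j) :
    σ n i * σ n j = σ n j * σ n i := by
  by_cases hj : j ≤ n - 1
  · rw [sigma_big h1 (by omega), sigma_big (by omega) hj]
    exact comm_rel_fin _ _ (by simp; omega)
  · rw [sigma_junk (j := j) (by omega)]; group

lemma sigma_zero (n : ℕ) : σ n 0 = σ n 1 := rfl



lemma range_prod_succ_head {G : Type*} [Monoid G] (f : ℕ → G) (m : ℕ) :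
    ((List.range (m+1)).map f).prod = f 0 * ((List.range m).map (fun k => f (k+1))).prod := by
  rw [List.range_succ_eq_map, List.map_cons, List.prod_cons, List.map_map]
  rfl

lemma range_prod_succ_last {G : Type*} [Monoid G] (f : ℕ → G) (m : ℕ) :
    ((List.range (m+1)).map f).prod = ((List.range m).map f).prod * f m := by
  rw [List.range_succ, List.map_append, List.prod_append]; simp

lemma range_prod_congr {G : Type*} [Monoid G] (f g : ℕ → G) (m : ℕ)
    (h : ∀ k < m, f k = g k) :
    ((List.range m).map f).prod = ((List.range m).map g).prod := by
  congr 1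
  apply List.map_congr_left
  intro k hk
  exact h k (List.mem_range.mp hk)

lemma Xb_empty {n a b : ℕ} (h : b ≤ a) : Xb n a b = 1 := by
  have : b - a = 0 := by omega
  simp [Xb, this]

lemma Yb_empty {n a b : ℕ} (h : b ≤ a) : Yb n a b = 1 := by
  have : b - a = 0 := by omega
  simp [Yb, this]

lemma Xb_top {n a b : ℕ} (h : a < b) : Xb n a b = σ n (b-1) * Xb n a (b-1) := by
  have hb : b - a = (b - 1 - a) + 1 := by omega
  rw [Xb, hb, range_prod_succ_head]
  congr 1
  rw [Xb]
  apply range_prod_congr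
  intro k hk; congr 1; omega

lemma Xb_bot {n a b : ℕ} (h : a < b) : Xb n a b = Xb n (a+1) b * σ n a := by
  have hb : b - a = (b - (a+1)) + 1 := by omega
  rw [Xb, hb, range_prod_succ_last, Xb]
  congr 2
  omega

lemma Yb_bot {n a b : ℕ} (h : a < b) : Yb n a b = σ n a * Yb n (a+1) b := by
  have hb : b - a = (b - (a+1)) + 1 := by omega
  rw [Yb, hb, range_prod_succ_head]
  congr 1
  rw [Yb]
  apply range_prod_congr
  intro k hk; congr 1; omega

lemma Yb_top {n a b : ℕ} (h : a < b) : Yb n a b = Yb n a (b-1) * σ n (b-1) := by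
  have hb : b - a = (b - 1 - a) + 1 := by omega
  rw [Yb, hb, range_prod_succ_last, Yb]
  congr 2
  omega

lemma Xb_concat {n a b c : ℕ} (h1 : a ≤ b) (h2 : b ≤ c) :
    Xb n b c * Xb n a b = Xb n a c := by
  induction' hd : b - a with d ih generalizing a
  · have : a = b := by omega
    subst this; rw [Xb_empty le_rfl, mul_one]
  · have ha : a < b := by omega
    rw [Xb_bot ha, ← mul_assoc, ih (a := a+1) (by omega) (by omega), ← Xb_bot (by omega)]

lemma Yb_concat {n a b c : ℕ} (h1 : a ≤ b) (h2 : b ≤ c) :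
    Yb n a b * Yb n b c = Yb n a c := by
  induction' hd : b - a with d ih generalizing a
  · have : a = b := by omega
    subst this; rw [Yb_empty le_rfl, one_mul]
  · have ha : a < b := by omega
    rw [Yb_bot ha, mul_assoc, ih (a := a+1) (by omega) (by omega), ← Yb_bot (by omega)]

lemma comm_sigma_Xb {n a d j : ℕ} (h1 : 1 ≤ a) (h2 : d + 1 ≤ j) :
    Commute (σ n j) (Xb n a d) := by
  induction' hd : d - a with t ih generalizing d
  · rw [Xb_empty (by omega)]; exact Commute.one_right _
  · have ha : a < d := by omega
    rw [Xb_top ha]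
    exact Commute.mul_right ((comm_rel (by omega) (by omega)).symm) (ih (d := d-1) (by omega) (by omega))

lemma comm_sigma_Yb {n a d j : ℕ} (h1 : 1 ≤ a) (h2 : d + 1 ≤ j) :
    Commute (σ n j) (Yb n a d) := by
  induction' hd : d - a with t ih generalizing d
  · rw [Yb_empty (by omega)]; exact Commute.one_right _
  · have ha : a < d := by omega
    rw [Yb_top ha]
    exact Commute.mul_right (ih (d := d-1) (by omega) (by omega)) ((comm_rel (by omega) (by omega)).symm)

lemma Xshift {n a b j : ℕ} (h1 : 1 ≤ a) (h2 : a + 1 ≤ j) (h3 : j ≤ b - 1) (h4 : b ≤ n) :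
    Xb n a b * σ n j = σ n (j-1) * Xb n a b := by
  induction' b using Nat.strong_induction_on with b ih generalizing j
  rcases Nat.lt_or_ge j (b-1) with hj | hj
  · rw [Xb_top (show a < b by omega), mul_assoc,
      ih (b-1) (by omega) (by omega) (by omega) (by omega),
      ← mul_assoc, (comm_rel (show 1 ≤ j-1 by omega) (show (j-1)+2 ≤ b-1 by omega)).symm,
      mul_assoc, ← Xb_top (show a < b by omega)]
  · have hjb : j = b - 1 := by omega
    subst hjb
    have hcomm : Commute (σ n (b-1)) (Xb n a (b-1-1)) :=
      comm_sigma_Xb h1 (by omega)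
    have hbr := braid_rel (n := n) (j := b-1-1) (by omega) (by omega)
    rw [show b-1-1+1 = b-1 by omega] at hbr
    calc Xb n a b * σ n (b-1)
        = σ n (b-1) * (σ n (b-1-1) * Xb n a (b-1-1)) * σ n (b-1) := by
          rw [Xb_top (show a < b by omega), Xb_top (show a < b-1 by omega)]
      _ = σ n (b-1) * σ n (b-1-1) * (Xb n a (b-1-1) * σ n (b-1)) := by
          simp [mul_assoc]
      _ = σ n (b-1) * σ n (b-1-1) * σ n (b-1) * Xb n a (b-1-1) := by
          rw [hcomm.symm.eq]; simp [mul_assoc]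
      _ = σ n (b-1-1) * σ n (b-1) * σ n (b-1-1) * Xb n a (b-1-1) := by
          rw [← hbr]
      _ = σ n (b-1-1) * (σ n (b-1) * (σ n (b-1-1) * Xb n a (b-1-1))) := by
          simp [mul_assoc]
      _ = σ n (b-1-1) * (σ n (b-1) * Xb n a (b-1)) := by
          rw [← Xb_top (show a < b-1 by omega)]
      _ = σ n (b-1-1) * Xb n a b := by
          rw [← Xb_top (show a < b by omega)]

lemma XbshiftXb {n a b c d : ℕ} (h1 : 1 ≤ a) (h2 : a + 1 ≤ c) (h3 : d ≤ b) (h4 : b ≤ n) :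
    Xb n a b * Xb n c d = Xb n (c-1) (d-1) * Xb n a b := by
  induction' hd : d - c with t ih generalizing d
  · rw [Xb_empty (n := n) (a := c) (b := d) (by omega),
      Xb_empty (n := n) (a := c-1) (b := d-1) (by omega), mul_one, one_mul]
  · have hcd : c < d := by omega
    have e1 : d - 1 - 1 = d - 2 := by omega
    have e2 : c - 1 + 1 = c := by omega
    rw [Xb_top hcd, ← mul_assoc,
      Xshift h1 (by omega) (show d - 1 ≤ b - 1 by omega) h4,
      mul_assoc, ih (d := d-1) (by omega) (by omega), ← mul_assoc,
      ← Xb_top (show c - 1 < d - 1 by omega)]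

lemma YbshiftXb {n a b c d : ℕ} (h1 : 1 ≤ a) (h2 : a + 1 ≤ c) (h3 : d ≤ b) (h4 : b ≤ n) :
    Xb n a b * Yb n c d = Yb n (c-1) (d-1) * Xb n a b := by
  induction' hd : d - c with t ih generalizing c
  · rw [Yb_empty (n := n) (a := c) (b := d) (by omega),
      Yb_empty (n := n) (a := c-1) (b := d-1) (by omega), mul_one, one_mul]
  · have hc : c - 1 + 1 = c := by omega
    rw [Yb_bot (show c < d by omega), ← mul_assoc,
      Xshift h1 h2 (show c ≤ b - 1 by omega) h4,
      mul_assoc, ih (c := c+1) (by omega) (by omega),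
      show c+1-1 = c by omega, ← mul_assoc]
    rw [show Yb n (c-1) (d-1) = σ n (c-1) * Yb n c (d-1) by
      rw [Yb_bot (show c-1 < d-1 by omega), hc]]


lemma Xpow_shift {n a b j t : ℕ} (h1 : 1 ≤ a) (h2 : a + t ≤ j) (h3 : j ≤ b - 1) (h4 : b ≤ n) :
    Xb n a b ^ t * σ n j = σ n (j-t) * Xb n a b ^ t := by
  induction' t with t ih generalizing j
  · simp
  · rw [pow_succ, mul_assoc, Xshift h1 (by omega) h3 h4, ← mul_assoc,
      ih (by omega) (by omega), show j - 1 - t = j - (t+1) by omega, mul_assoc]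

lemma wrap {n a b : ℕ} (h1 : 1 ≤ a) (h2 : a < b) (h3 : b ≤ n) :
    σ n (b-1) * Xb n a b ^ 2 = Xb n a b ^ 2 * σ n a := by
  have hbot : Xb n a b = Xb n (a+1) b * σ n a := Xb_bot h2
  have hD2 : Xb n a b ^ 2 = Xb n a (b-1) * Xb n a b * σ n a := by
    calc Xb n a b ^ 2
        = Xb n a b * (Xb n (a+1) b * σ n a) := by rw [pow_two, ← hbot]
      _ = Xb n a b * Xb n (a+1) b * σ n a := by rw [mul_assoc]
      _ = Xb n a (b-1) * Xb n a b * σ n a := by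
          rw [XbshiftXb h1 (by omega) le_rfl h3, show a+1-1 = a by omega]
  calc σ n (b-1) * Xb n a b ^ 2
      = (σ n (b-1) * Xb n a (b-1)) * (Xb n a b * σ n a) := by rw [hD2]; simp [mul_assoc]
    _ = Xb n a b * (Xb n a b * σ n a) := by rw [← Xb_top h2]
    _ = Xb n a b ^ 2 * σ n a := by rw [pow_two]; simp [mul_assoc]

lemma FT_comm_sigma_mid {n j : ℕ} (hn : 2 ≤ n) (hj1 : 1 ≤ j) (hj2 : j ≤ n - 1) :
    Xb n 1 n ^ n * σ n j = σ n j * Xb n 1 n ^ n := by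
  set δ := Xb n 1 n with hδ
  have e1 : δ ^ n = δ ^ (n-2-(j-1)) * δ ^ 2 * δ ^ (j-1) := by
    rw [← pow_add, ← pow_add]; congr 1; omega
  have s1 : δ ^ (j-1) * σ n j = σ n 1 * δ ^ (j-1) := by
    rw [hδ, Xpow_shift le_rfl (by omega) (by omega) le_rfl, show j - (j-1) = 1 by omega]
  have s2 : δ ^ 2 * σ n 1 = σ n (n-1) * δ ^ 2 := by
    rw [hδ, ← wrap le_rfl (by omega) le_rfl]
  have s3 : δ ^ (n-2-(j-1)) * σ n (n-1) = σ n j * δ ^ (n-2-(j-1)) := by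
    rw [hδ, Xpow_shift le_rfl (by omega) (by omega) le_rfl,
      show n - 1 - (n-2-(j-1)) = j by omega]
  calc δ ^ n * σ n j
      = δ ^ (n-2-(j-1)) * δ ^ 2 * (δ ^ (j-1) * σ n j) := by rw [e1]; simp [mul_assoc]
    _ = δ ^ (n-2-(j-1)) * (δ ^ 2 * σ n 1) * δ ^ (j-1) := by rw [s1]; simp [mul_assoc]
    _ = (δ ^ (n-2-(j-1)) * σ n (n-1)) * δ ^ 2 * δ ^ (j-1) := by rw [s2]; simp [mul_assoc]
    _ = σ n j * (δ ^ (n-2-(j-1)) * δ ^ 2 * δ ^ (j-1)) := by rw [s3]; simp [mul_assoc]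
    _ = σ n j * δ ^ n := by rw [← e1]

lemma FT_comm_sigma {n j : ℕ} (hn : 2 ≤ n) :
    FTb n * σ n j = σ n j * FTb n := by
  rcases Nat.lt_or_ge j n with hj | hj
  · rcases Nat.eq_zero_or_pos j with hj0 | hj0
    · subst hj0
      rw [sigma_zero]
      exact FT_comm_sigma_mid hn le_rfl (by omega)
    · exact FT_comm_sigma_mid hn hj0 (by omega)
  · rw [sigma_junk (j := j) hj, mul_one, one_mul]

lemma FT_comm_Yb {n a b : ℕ} (hn : 2 ≤ n) : Commute (FTb n) (Yb n a b) := by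
  induction' hd : b - a with t ih generalizing a
  · rw [Yb_empty (n := n) (a := a) (b := b) (by omega)]; exact Commute.one_right _
  · rw [Yb_bot (show a < b by omega)]
    exact Commute.mul_right (FT_comm_sigma hn) (ih (a := a+1) (by omega))

lemma lemL {n b c : ℕ} (h1 : 1 ≤ c) (h2 : c + 1 ≤ b) (h3 : b ≤ n) :
    σ n c * (Yb n (c+1) b * Yb n c (b-1)) = (Yb n (c+1) b * Yb n c (b-1)) * σ n (b-1) := by
  induction' b using Nat.strong_induction_on with b ih
  rcases Nat.eq_or_lt_of_le h2 with hb | hb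
  · -- b = c + 1
    rw [← hb, Yb_empty (n := n) (a := c+1) (b := c+1) le_rfl,
      Yb_empty (n := n) (a := c) (b := c+1-1) (by omega)]
    simp [show c+1-1 = c by omega]
  · -- b ≥ c + 2
    have hE : Yb n (c+1) b * Yb n c (b-1)
        = (Yb n (c+1) (b-1) * Yb n c (b-1-1)) * (σ n (b-1) * σ n (b-1-1)) := by
      rw [Yb_top (show c+1 < b by omega), Yb_top (show c < b-1 by omega)]
      have hcm : Commute (σ n (b-1)) (Yb n c (b-1-1)) := comm_sigma_Yb h1 (by omega)
      calc Yb n (c+1) (b-1) * σ n (b-1) * (Yb n c (b-1-1) * σ n (b-1-1))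
          = Yb n (c+1) (b-1) * (σ n (b-1) * Yb n c (b-1-1)) * σ n (b-1-1) := by
            simp [mul_assoc]
        _ = Yb n (c+1) (b-1) * (Yb n c (b-1-1) * σ n (b-1)) * σ n (b-1-1) := by
            rw [hcm.eq]
        _ = (Yb n (c+1) (b-1) * Yb n c (b-1-1)) * (σ n (b-1) * σ n (b-1-1)) := by
            simp [mul_assoc]
    have ihb := ih (b-1) (by omega) (by omega) (by omega)
    rw [show b-1-1 = b-1-1 from rfl] at ihb
    have hbr := braid_rel (n := n) (j := b-1-1) (by omega) (by omega)
    rw [show b-1-1+1 = b-1 by omega] at hbr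
    calc σ n c * (Yb n (c+1) b * Yb n c (b-1))
        = (σ n c * (Yb n (c+1) (b-1) * Yb n c (b-1-1))) * (σ n (b-1) * σ n (b-1-1)) := by
          rw [hE]; simp [mul_assoc]
      _ = (Yb n (c+1) (b-1) * Yb n c (b-1-1)) * (σ n (b-1-1) * (σ n (b-1) * σ n (b-1-1))) := by
          rw [ihb]; simp [mul_assoc]
      _ = (Yb n (c+1) (b-1) * Yb n c (b-1-1)) * (σ n (b-1) * (σ n (b-1-1) * σ n (b-1))) := by
          rw [← mul_assoc (σ n (b-1-1)), hbr]; simp [mul_assoc]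
      _ = (Yb n (c+1) b * Yb n c (b-1)) * σ n (b-1) := by
          rw [hE]; simp [mul_assoc]

lemma lemM {n a b m : ℕ} (h1 : 1 ≤ a) (h2 : m ≤ b - 1 - a) (h3 : b ≤ n) :
    Xb n a (b-1) ^ m * σ n (b-1) * (Xb n a (b-1) ^ m)⁻¹
      = Yb n (b-1-m) (b-1) * σ n (b-1) * (Yb n (b-1-m) (b-1))⁻¹ := by
  induction' m with m ih
  · simp [Yb_empty (n := n) (a := b-1) (b := b-1) le_rfl]
  · have ihm := ih (by omega)
    set W := Xb n a (b-1) with hW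
    have hshift : W * Yb n (b-1-m) (b-1) = Yb n (b-1-m-1) (b-1-1) * W := by
      rw [hW]
      exact YbshiftXb h1 (by omega) (by omega) (by omega)
    have h2' : W = σ n (b-1-1) * Xb n a (b-1-1) := Xb_top (show a < b-1 by omega)
    have hcm : Commute (σ n (b-1)) (Xb n a (b-1-1)) := comm_sigma_Xb h1 (by omega)
    have key : W * (Yb n (b-1-m) (b-1) * σ n (b-1) * (Yb n (b-1-m) (b-1))⁻¹) * W⁻¹
        = Yb n (b-1-(m+1)) (b-1) * σ n (b-1) * (Yb n (b-1-(m+1)) (b-1))⁻¹ := by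
      have hu : Yb n (b-1-(m+1)) (b-1) = Yb n (b-1-m-1) (b-1-1) * σ n (b-1-1) := by
        rw [show b-1-(m+1) = b-1-m-1 by omega, Yb_top (show b-1-m-1 < b-1 by omega)]
      calc W * (Yb n (b-1-m) (b-1) * σ n (b-1) * (Yb n (b-1-m) (b-1))⁻¹) * W⁻¹
          = (W * Yb n (b-1-m) (b-1)) * σ n (b-1) * (W * Yb n (b-1-m) (b-1))⁻¹ := by
            simp [mul_assoc]
        _ = Yb n (b-1-m-1) (b-1-1) * (W * σ n (b-1) * W⁻¹) * (Yb n (b-1-m-1) (b-1-1))⁻¹ := by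
            rw [hshift]; simp [mul_assoc]
        _ = Yb n (b-1-m-1) (b-1-1) * (σ n (b-1-1) * σ n (b-1) * (σ n (b-1-1))⁻¹)
              * (Yb n (b-1-m-1) (b-1-1))⁻¹ := by
            congr 2
            rw [h2', mul_inv_rev, mul_assoc, mul_assoc,
              ← mul_assoc (Xb n a (b-1-1)), hcm.symm.eq]
            simp [mul_assoc]
        _ = Yb n (b-1-(m+1)) (b-1) * σ n (b-1) * (Yb n (b-1-(m+1)) (b-1))⁻¹ := by
            rw [hu]; simp [mul_assoc]
    rw [← key, ← ihm]
    rw [pow_succ']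
    simp [mul_assoc]

lemma lemR {n a b m : ℕ} (h1 : 1 ≤ a) (h2 : m ≤ b - a) (h3 : b ≤ n) :
    Xb n a b ^ m = Yb n (b-m) b * Xb n a (b-1) ^ m := by
  induction' m with m ih
  · simp [Yb_empty (n := n) (a := b) (b := b) le_rfl]
  · have ihm := ih (by omega)
    have hM := lemM (n := n) (a := a) (b := b) (m := m) h1 (by omega) h3
    set W := Xb n a (b-1) with hW
    set u := Yb n (b-1-m) (b-1) with hu
    have hL : σ n (b-1-m) * (Yb n (b-m) b * u) = (Yb n (b-m) b * u) * σ n (b-1) := by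
      have := lemL (n := n) (b := b) (c := b-1-m) (by omega) (by omega) h3
      rw [show b-1-m+1 = b-m by omega] at this
      exact this
    have hDtop : Xb n a b = σ n (b-1) * W := by rw [hW]; exact Xb_top (by omega)
    have hWs : W ^ m * σ n (b-1) = u * σ n (b-1) * u⁻¹ * W ^ m := by
      calc W ^ m * σ n (b-1)
          = (W ^ m * σ n (b-1) * (W ^ m)⁻¹) * W ^ m := by simp [mul_assoc]
        _ = u * σ n (b-1) * u⁻¹ * W ^ m := by rw [hM]
    calc Xb n a b ^ (m+1)
        = Xb n a b ^ m * Xb n a b := by rw [pow_succ]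
      _ = Yb n (b-m) b * (W ^ m * σ n (b-1)) * W := by
          rw [ihm, hDtop]; simp [mul_assoc]
      _ = Yb n (b-m) b * (u * σ n (b-1) * u⁻¹) * W ^ (m+1) := by
          rw [hWs, pow_succ]; simp [mul_assoc]
      _ = (Yb n (b-m) b * u * σ n (b-1)) * u⁻¹ * W ^ (m+1) := by simp [mul_assoc]
      _ = (σ n (b-1-m) * (Yb n (b-m) b * u)) * u⁻¹ * W ^ (m+1) := by rw [hL]
      _ = σ n (b-1-m) * Yb n (b-m) b * W ^ (m+1) := by simp [mul_assoc]
      _ = Yb n (b-(m+1)) b * W ^ (m+1) := by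
          rw [show Yb n (b-(m+1)) b = σ n (b-1-m) * Yb n (b-m) b by
            rw [Yb_bot (show b-(m+1) < b by omega), show b-(m+1) = b-1-m by omega,
              show b-1-m+1 = b-m by omega]]

lemma key_identity {n : ℕ} (hn : 2 ≤ n) :
    FTb n = Yb n 1 n * Xb n 1 n * Xb n 2 n ^ (n-1) := by
  have hR := lemR (n := n) (a := 1) (b := n) (m := n-1) le_rfl (by omega) le_rfl
  rw [show n - (n-1) = 1 by omega] at hR
  have hshift : Xb n 1 n * Xb n 2 n = Xb n 1 (n-1) * Xb n 1 n := by
    have := XbshiftXb (n := n) (a := 1) (b := n) (c := 2) (d := n) le_rfl le_rfl le_rfl le_rfl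
    rwa [show (2:ℕ)-1 = 1 by omega] at this
  have hsemi : SemiconjBy (Xb n 1 n) (Xb n 2 n ^ (n-1)) (Xb n 1 (n-1) ^ (n-1)) :=
    (SemiconjBy.pow_right hshift (n-1))
  calc FTb n = Xb n 1 n ^ (n-1) * Xb n 1 n := by rw [FTb, ← pow_succ]; congr 1; omega
    _ = Yb n 1 n * Xb n 1 (n-1) ^ (n-1) * Xb n 1 n := by rw [hR]
    _ = Yb n 1 n * (Xb n 1 n * Xb n 2 n ^ (n-1)) := by rw [mul_assoc, ← hsemi.eq]
    _ = Yb n 1 n * Xb n 1 n * Xb n 2 n ^ (n-1) := by rw [mul_assoc]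

lemma sh_FT {n : ℕ} (hn : 2 ≤ n) (sh : BraidGroup (n - 1) →* BraidGroup n)
    (hsh : ∀ j, 1 ≤ j → j ≤ n - 2 → sh (σ (n - 1) j) = σ n (j + 1)) :
    sh (FTb (n-1)) = Xb n 2 n ^ (n-1) := by
  have hX : sh (Xb (n-1) 1 (n-1)) = Xb n 2 n := by
    rw [Xb, Xb, map_list_prod, List.map_map]
    rw [show n - 2 = (n-1) - 1 from rfl]
    apply range_prod_congr
    intro k hk
    simp only [Function.comp_apply]
    rw [show (n-1) - 1 - k = (n-2-k) by omega, hsh (n-2-k) (by omega) (by omega)]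
    congr 1
    omega
  rw [FTb, map_pow, hX]

/-- In `Br_n` (`n ≥ 2`), for every `1 ≤ i ≤ n-1` and `m ≥ 1`:
`X_{[1,n-i]}·sh(FT_{n-1})·FT_n^{m-1}·Y_{[1,n-i]}
  = X_{[n-i,n]}⁻¹·Y_{[n-i,n]}⁻¹·FT_n^m`,
where `sh : Br_{n-1} → Br_n` is the homomorphism sending `σ_j` to `σ_{j+1}`. -/
theorem stmt15 (n : ℕ) (hn : 2 ≤ n)
    (sh : BraidGroup (n - 1) →* BraidGroup n)
    (hsh : ∀ j, 1 ≤ j → j ≤ n - 2 → sh (σ (n - 1) j) = σ n (j + 1))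
    (i m : ℕ) (hi1 : 1 ≤ i) (hi2 : i ≤ n - 1) (hm : 1 ≤ m) :
    Xb n 1 (n - i) * sh (FTb (n - 1)) * FTb n ^ (m - 1) * Yb n 1 (n - i) =
      (Xb n (n - i) n)⁻¹ * (Yb n (n - i) n)⁻¹ * FTb n ^ m := by
  set k := n - i with hk
  have hk1 : 1 ≤ k := by omega
  have hk2 : k ≤ n - 1 := by omega
  set Z := Xb n 2 n with hZ
  set B := Yb n k n * Xb n k n with hB
  set P := Xb n 1 k * Z ^ (n-1) with hP
  have C1 : Commute (FTb n) (Yb n 1 k) := FT_comm_Yb hn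
  have h5 : Yb n 1 k * (B * P) = FTb n := by
    calc Yb n 1 k * (B * P)
        = (Yb n 1 k * Yb n k n) * ((Xb n k n * Xb n 1 k) * Z ^ (n-1)) := by
          rw [hB, hP]; simp [mul_assoc]
      _ = Yb n 1 n * (Xb n 1 n * Z ^ (n-1)) := by
          rw [Yb_concat hk1 (by omega), Xb_concat hk1 (by omega)]
      _ = FTb n := by rw [key_identity hn, mul_assoc]
  have hYFT : (Yb n 1 k)⁻¹ * FTb n * Yb n 1 k = FTb n := by
    rw [mul_assoc, C1.eq, ← mul_assoc]
    simp
  have hPY : P * Yb n 1 k = B⁻¹ * FTb n := by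
    have hP' : P = B⁻¹ * ((Yb n 1 k)⁻¹ * FTb n) := by
      rw [← h5]; simp [mul_assoc]
    rw [hP', mul_assoc, mul_assoc, ← mul_assoc (Yb n 1 k)⁻¹, hYFT]
  have hCpow : FTb n ^ (m-1) * Yb n 1 k = Yb n 1 k * FTb n ^ (m-1) :=
    (C1.pow_left (m-1)).eq
  have hpows : FTb n * FTb n ^ (m-1) = FTb n ^ m := by
    rw [← pow_succ']; congr 1; omega
  calc Xb n 1 k * sh (FTb (n-1)) * FTb n ^ (m-1) * Yb n 1 k
      = P * (FTb n ^ (m-1) * Yb n 1 k) := by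
        rw [sh_FT hn sh hsh, hP]; simp [mul_assoc]; rfl
    _ = (P * Yb n 1 k) * FTb n ^ (m-1) := by rw [hCpow]; simp [mul_assoc]
    _ = B⁻¹ * (FTb n * FTb n ^ (m-1)) := by rw [hPY]; simp [mul_assoc]
    _ = (Xb n k n)⁻¹ * (Yb n k n)⁻¹ * FTb n ^ m := by
        rw [hpows, hB, mul_inv_rev, mul_assoc]
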